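/- For a monotone testing policy D on [0,1]^K with null p-values Uniform(0,1), independent p-values, and extreme alternatives available, the probability of any false rejection when the true nulls are exactly the set I (with the non-null p-values driven to 0 along the extreme alternative sequence) converges to ∫_{[0,1]^{|I|}} max_{k ∈ I} D_k(p_I^0) dp_I, provided D is coordinatewise right-continuous at 0. In particular the supremum over all alternative parameters of the FWER when the null set is I equals this integral. -/

import Mathlib

open MeasureTheory
open scoped ENNReal

namespace Stmt12Aux

noncomputable def unif : Measure ℝ := volume.restrict (Set.Icc 0 1)

lemma unif_prob : IsProbabilityMeasure unif :=
  ⟨by simp [unif, Real.volume_Icc]⟩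

noncomputable def lam (K : ℕ) : Measure (Fin K → ℝ) := Measure.pi fun _ => unif

lemma lam_prob (K : ℕ) : IsProbabilityMeasure (lam K) := by
  haveI := unif_prob
  unfold lam; infer_instance

variable {K : ℕ}

def Aset (D : (Fin K → ℝ) → Fin K → ℝ) (I : Finset (Fin K)) : Set (Fin K → ℝ) :=
  {p | ∃ k ∈ I, D p k = 1}

def ZS (I : Finset (Fin K)) (ε : ℝ) : (Fin K → ℝ) → Fin K → ℝ :=
  fun p i => if i ∈ I then p i else ε

def WS (I : Finset (Fin K)) (ε : ℝ) : ({i : Fin K // i ∈ I} → ℝ) → Fin K → ℝ :=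
  fun x i => if h : i ∈ I then x ⟨i, h⟩ else ε

@[simp] lemma ZS_apply (I : Finset (Fin K)) (ε : ℝ) (p : Fin K → ℝ) (i : Fin K) :
    ZS I ε p i = if i ∈ I then p i else ε := rfl

lemma measurable_ZS (I : Finset (Fin K)) (ε : ℝ) : Measurable (ZS I ε) :=
  measurable_pi_lambda _ fun i => by
    by_cases h : i ∈ I
    · simpa [ZS, h] using (measurable_pi_apply i)
    · simpa [ZS, h] using (measurable_const : Measurable fun _ : Fin K → ℝ => ε)

lemma measurable_WS (I : Finset (Fin K)) (ε : ℝ) : Measurable (WS I ε) :=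
  measurable_pi_lambda _ fun i => by
    by_cases h : i ∈ I
    · simpa [WS, h] using (measurable_pi_apply (⟨i, h⟩ : {i : Fin K // i ∈ I}))
    · simpa [WS, h] using (measurable_const : Measurable fun _ : {i : Fin K // i ∈ I} → ℝ => ε)

lemma meas_Aset {D : (Fin K → ℝ) → Fin K → ℝ} (hDmeas : ∀ k, Measurable fun p => D p k)
    (I : Finset (Fin K)) : MeasurableSet (Aset D I) := by
  have : Aset D I = ⋃ k, ⋃ (_ : k ∈ I), (fun p => D p k) ⁻¹' {1} := by
    ext p; simp [Aset]
  rw [this]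
  exact MeasurableSet.iUnion fun k => MeasurableSet.iUnion fun _ =>
    (hDmeas k) (measurableSet_singleton 1)

lemma pi_measure_aux (I : Finset (Fin K)) (κ : Fin K → Measure ℝ) [∀ k, SigmaFinite (κ k)]
    {B : Set (Fin K → ℝ)} (hB : MeasurableSet B) {C : Set ℝ} (hC : MeasurableSet C) (ε : ℝ) :
    Measure.pi κ ((ZS I ε) ⁻¹' B ∩ {p | ∀ k, k ∉ I → p k ∈ C})
      = (Measure.pi fun k : {i : Fin K // i ∈ I} => κ k) ((WS I ε) ⁻¹' B)
        * ∏ k : {i : Fin K // ¬ i ∈ I}, κ k C := by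
  have hmp := measurePreserving_piEquivPiSubtypeProd (α := fun _ : Fin K => ℝ) κ
      (fun i : Fin K => i ∈ I)
  have hset : (ZS I ε) ⁻¹' B ∩ {p | ∀ k, k ∉ I → p k ∈ C}
      = (MeasurableEquiv.piEquivPiSubtypeProd (π := fun _ : Fin K => ℝ) (fun i : Fin K => i ∈ I))
          ⁻¹' (((WS I ε) ⁻¹' B) ×ˢ (Set.univ.pi fun _ => C)) := by
    ext p
    have h1 : ZS I ε p = WS I ε (fun i : {i : Fin K // i ∈ I} => p i) := by
      funext i; by_cases h : i ∈ I <;> simp [ZS, WS, h]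
    simp only [Set.mem_inter_iff, Set.mem_preimage, Set.mem_setOf_eq,
      MeasurableEquiv.piEquivPiSubtypeProd_apply, Set.mem_prod, Set.mem_univ_pi]
    constructor
    · rintro ⟨hB', hC'⟩
      exact ⟨by rwa [← h1], fun k => hC' k k.2⟩
    · rintro ⟨hB', hC'⟩
      exact ⟨by rwa [h1], fun k hk => hC' ⟨k, hk⟩⟩
  rw [hset, hmp.measure_preimage
      ((((measurable_WS I ε) hB).prod (MeasurableSet.univ_pi fun _ => hC)).nullMeasurableSet),
    Measure.prod_prod, Measure.pi_pi]
  congr!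

lemma pi_measure_ZS (I : Finset (Fin K)) (κ : Fin K → Measure ℝ)
    [∀ k, IsProbabilityMeasure (κ k)]
    {B : Set (Fin K → ℝ)} (hB : MeasurableSet B) (ε : ℝ) :
    Measure.pi κ ((ZS I ε) ⁻¹' B)
      = (Measure.pi fun k : {i : Fin K // i ∈ I} => κ k) ((WS I ε) ⁻¹' B) := by
  have h := pi_measure_aux I κ hB (MeasurableSet.univ (α := ℝ)) ε
  have h2 : {p : Fin K → ℝ | ∀ k, k ∉ I → p k ∈ (Set.univ : Set ℝ)} = Set.univ := by
    ext p; simp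
  rw [h2, Set.inter_univ] at h
  simpa [measure_univ] using h

lemma pi_measure_ZS_eq (I : Finset (Fin K)) (κ : Fin K → Measure ℝ)
    [∀ k, IsProbabilityMeasure (κ k)]
    (hnull : ∀ k ∈ I, κ k = volume.restrict (Set.Icc 0 1))
    {B : Set (Fin K → ℝ)} (hB : MeasurableSet B) (ε : ℝ) :
    Measure.pi κ ((ZS I ε) ⁻¹' B) = lam K ((ZS I ε) ⁻¹' B) := by
  haveI := unif_prob
  rw [pi_measure_ZS I κ hB ε, show lam K = Measure.pi fun _ : Fin K => unif from rfl,
    pi_measure_ZS I (fun _ : Fin K => unif) hB ε]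
  rw [show (fun k : {i : Fin K // i ∈ I} => κ k.1) = fun _ => unif from
    funext fun k => (hnull k.1 k.2).trans rfl]

def US (S : Finset (Fin K)) (q : Fin K → ℝ) (t : ℝ) : Fin K → ℝ :=
  fun i => if i ∈ S then t else q i

section Dhyp

variable {D : (Fin K → ℝ) → Fin K → ℝ}
variable (hD01 : ∀ p k, D p k = 0 ∨ D p k = 1)
variable (hmono : ∀ p q : Fin K → ℝ, (∀ i, p i ≤ q i) → ∀ k, D q k ≤ D p k)

include hD01 hmono in
lemma D_one_of_le {p q : Fin K → ℝ} (hle : ∀ i, p i ≤ q i) {k : Fin K}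
    (h : D q k = 1) : D p k = 1 := by
  have h2 := hmono p q hle k
  rw [h] at h2
  rcases hD01 p k with h0 | h1
  · rw [h0] at h2; norm_num at h2
  · exact h1

include hD01 hmono in
lemma exists_pos_of_US
    (hrc : ∀ (p : Fin K → ℝ) (i k : Fin K),
      Filter.Tendsto (fun ε : ℝ => D (Function.update p i ε) k)
        (nhdsWithin 0 (Set.Ioi 0)) (nhds (D (Function.update p i 0) k)))
    (k : Fin K) :
    ∀ (S : Finset (Fin K)) (q : Fin K → ℝ), D (US S q 0) k = 1 →
      ∃ ε > (0:ℝ), D (US S q ε) k = 1 := by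
  intro S
  classical
  induction S using Finset.induction_on with
  | empty =>
    intro q h
    refine ⟨1, one_pos, ?_⟩
    have : ∀ t : ℝ, US (∅ : Finset (Fin K)) q t = q := by
      intro t; funext j; simp [US]
    rw [this] at h ⊢; exact h
  | @insert i S' hiS' IH =>
    intro q h
    have h1 : US (insert i S') q 0 = Function.update (US S' q 0) i 0 := by
      funext j
      by_cases hj : j = i
      · subst hj; simp [US, Function.update_self]
      · simp [US, Function.update_apply, hj, Finset.mem_insert]
    rw [h1] at h
    have h2 : ∀ᶠ ε in nhdsWithin (0:ℝ) (Set.Ioi 0),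
        D (Function.update (US S' q 0) i ε) k ≠ 0 :=
      (hrc (US S' q 0) i k).eventually_ne (by rw [h]; exact one_ne_zero)
    have h3 : ∀ᶠ ε in nhdsWithin (0:ℝ) (Set.Ioi 0), ε ∈ Set.Ioi (0:ℝ) :=
      self_mem_nhdsWithin
    obtain ⟨ε₁, hne, hε₁⟩ := (h2.and h3).exists
    have hε₁pos : (0:ℝ) < ε₁ := hε₁
    have hD1 : D (Function.update (US S' q 0) i ε₁) k = 1 :=
      (hD01 _ k).resolve_left hne
    have h4 : Function.update (US S' q 0) i ε₁ = US S' (Function.update q i ε₁) 0 := by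
      funext j
      by_cases hj : j = i
      · subst hj; simp [US, Function.update_self, hiS']
      · simp [US, Function.update_apply, hj]
    rw [h4] at hD1
    obtain ⟨ε₂, hε₂pos, h5⟩ := IH (Function.update q i ε₁) hD1
    refine ⟨min ε₁ ε₂, lt_min hε₁pos hε₂pos, ?_⟩
    refine D_one_of_le hD01 hmono (q := US S' (Function.update q i ε₁) ε₂) ?_ h5
    intro j
    by_cases hj : j = i
    · subst hj
      simp only [US, Finset.mem_insert, true_or, if_pos, hiS', if_neg,
        Function.update_self]
      exact min_le_left _ _
    · by_cases hj' : j ∈ S'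
      · simp only [US, Finset.mem_insert, hj', or_true, if_pos, if_true]
        exact min_le_right _ _
      · simp only [US, Finset.mem_insert, hj, hj', or_self, if_false,
          Function.update_apply, if_neg]
        exact le_refl _

variable (I : Finset (Fin K))

include hD01 hmono in
lemma ZS_preimage_mono {ε ε' : ℝ} (h : ε' ≤ ε) :
    (ZS I ε) ⁻¹' (Aset D I) ⊆ (ZS I ε') ⁻¹' (Aset D I) := by
  intro p hp
  simp only [Set.mem_preimage, Aset, Set.mem_setOf_eq] at hp ⊢
  obtain ⟨k, hk, h1⟩ := hp
  refine ⟨k, hk, D_one_of_le hD01 hmono ?_ h1⟩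
  intro i
  by_cases hi : i ∈ I <;> simp [ZS, hi, h]

include hD01 hmono in
lemma tendsto_lam_ZS
    (hrc : ∀ (p : Fin K → ℝ) (i k : Fin K),
      Filter.Tendsto (fun ε : ℝ => D (Function.update p i ε) k)
        (nhdsWithin 0 (Set.Ioi 0)) (nhds (D (Function.update p i 0) k))) :
    Filter.Tendsto (fun n : ℕ => (lam K ((ZS I (1/(n+1:ℝ))) ⁻¹' (Aset D I))).toReal)
      Filter.atTop
      (nhds ((lam K ((ZS I 0) ⁻¹' (Aset D I))).toReal)) := by
  classical
  have hmonoS : Monotone (fun n : ℕ => (ZS I (1/(n+1:ℝ))) ⁻¹' (Aset D I)) := by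
    intro n m hnm
    refine ZS_preimage_mono hD01 hmono I ?_
    have h1 : (0:ℝ) < (n:ℝ) + 1 := by positivity
    have h2 : (n:ℝ) + 1 ≤ (m:ℝ) + 1 := by
      have := (Nat.cast_le (α := ℝ)).mpr hnm; linarith
    exact one_div_le_one_div_of_le h1 h2
  have hUnion : (⋃ n : ℕ, (ZS I (1/(n+1:ℝ))) ⁻¹' (Aset D I))
      = (ZS I 0) ⁻¹' (Aset D I) := by
    apply Set.Subset.antisymm
    · exact Set.iUnion_subset fun n => ZS_preimage_mono hD01 hmono I (by positivity)
    · intro p hp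
      simp only [Set.mem_preimage, Aset, Set.mem_setOf_eq] at hp
      obtain ⟨k, hk, h1⟩ := hp
      have hZU : ∀ t : ℝ, ZS I t p = US Iᶜ p t := by
        intro t; funext j
        by_cases hj : j ∈ I <;> simp [ZS, US, Finset.mem_compl, hj]
      have h2 : D (US Iᶜ p 0) k = 1 := by rw [← hZU]; exact h1
      obtain ⟨ε, hεpos, hDε⟩ := exists_pos_of_US hD01 hmono hrc k Iᶜ p h2
      obtain ⟨n, hn⟩ := exists_nat_one_div_lt hεpos
      refine Set.mem_iUnion.mpr ⟨n, ?_⟩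
      refine ZS_preimage_mono hD01 hmono I hn.le ?_
      simp only [Set.mem_preimage, Aset, Set.mem_setOf_eq]
      exact ⟨k, hk, by rw [hZU]; exact hDε⟩
  haveI := lam_prob K
  have h := tendsto_measure_iUnion_atTop (μ := lam K) hmonoS
  rw [hUnion] at h
  have h2 := (ENNReal.tendsto_toReal (measure_ne_top (lam K) _)).comp h
  exact h2

include hD01 hmono in
lemma upperE (hDmeas : ∀ k, Measurable fun p => D p k)
    (κ : Fin K → Measure ℝ) (hκp : ∀ k, IsProbabilityMeasure (κ k))
    (hκs : ∀ k, κ k (Set.Icc (0:ℝ) 1)ᶜ = 0)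
    (hκn : ∀ k ∈ I, κ k = volume.restrict (Set.Icc 0 1)) :
    Measure.pi κ (Aset D I) ≤ lam K ((ZS I 0) ⁻¹' (Aset D I)) := by
  classical
  haveI := hκp
  have hA := meas_Aset hDmeas I
  have hIcc : ∀ k, κ k (Set.Icc (0:ℝ) 1) = 1 := by
    intro k
    have h := measure_add_measure_compl (μ := κ k) (measurableSet_Icc (a := (0:ℝ)) (b := 1))
    rw [hκs k, add_zero] at h
    simpa using h
  have hGmeas : MeasurableSet {p : Fin K → ℝ | ∀ k, k ∉ I → p k ∈ Set.Ici (0:ℝ)} := by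
    rw [show {p : Fin K → ℝ | ∀ k, k ∉ I → p k ∈ Set.Ici (0:ℝ)}
        = ⋂ k, ⋂ (_ : k ∉ I), (fun p : Fin K → ℝ => p k) ⁻¹' Set.Ici 0 from by ext p; simp]
    exact MeasurableSet.iInter fun k => MeasurableSet.iInter fun _ =>
      measurable_pi_apply k measurableSet_Ici
  have hG1 : Measure.pi κ {p : Fin K → ℝ | ∀ k, k ∉ I → p k ∈ Set.Ici (0:ℝ)} = 1 := by
    have h := pi_measure_aux I κ (MeasurableSet.univ (α := Fin K → ℝ))
      (measurableSet_Ici (a := (0:ℝ))) 0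
    rw [Set.preimage_univ, Set.univ_inter] at h
    rw [h]
    have h1 : ∀ k : {i : Fin K // ¬ i ∈ I}, κ k (Set.Ici (0:ℝ)) = 1 := by
      intro k
      refine le_antisymm prob_le_one ?_
      calc (1:ℝ≥0∞) = κ k (Set.Icc 0 1) := (hIcc k).symm
        _ ≤ κ k (Set.Ici 0) := measure_mono Set.Icc_subset_Ici_self
    simp [Set.preimage_univ, h1, measure_univ]
  have hGc : Measure.pi κ {p : Fin K → ℝ | ∀ k, k ∉ I → p k ∈ Set.Ici (0:ℝ)}ᶜ = 0 := by
    have h := measure_compl (μ := Measure.pi κ) hGmeas (measure_ne_top _ _)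
    rw [hG1, measure_univ] at h
    simpa using h
  have hsub : Aset D I ⊆ (ZS I 0) ⁻¹' (Aset D I)
      ∪ {p : Fin K → ℝ | ∀ k, k ∉ I → p k ∈ Set.Ici (0:ℝ)}ᶜ := by
    intro p hp
    by_cases hg : p ∈ {p : Fin K → ℝ | ∀ k, k ∉ I → p k ∈ Set.Ici (0:ℝ)}
    · left
      simp only [Aset, Set.mem_setOf_eq, Set.mem_preimage] at hp ⊢
      obtain ⟨k, hk, h1⟩ := hp
      refine ⟨k, hk, D_one_of_le hD01 hmono ?_ h1⟩
      intro i
      by_cases hi : i ∈ I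
      · simp [ZS, hi]
      · simpa [ZS, hi] using hg i hi
    · right; exact hg
  calc Measure.pi κ (Aset D I)
      ≤ Measure.pi κ ((ZS I 0) ⁻¹' (Aset D I)
          ∪ {p : Fin K → ℝ | ∀ k, k ∉ I → p k ∈ Set.Ici (0:ℝ)}ᶜ) := measure_mono hsub
    _ ≤ Measure.pi κ ((ZS I 0) ⁻¹' (Aset D I))
        + Measure.pi κ {p : Fin K → ℝ | ∀ k, k ∉ I → p k ∈ Set.Ici (0:ℝ)}ᶜ :=
        measure_union_le _ _
    _ = Measure.pi κ ((ZS I 0) ⁻¹' (Aset D I)) := by rw [hGc, add_zero]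
    _ = lam K ((ZS I 0) ⁻¹' (Aset D I)) := pi_measure_ZS_eq I κ hκn hA 0

include hD01 hmono in
lemma lowerE (hDmeas : ∀ k, Measurable fun p => D p k)
    (κ : Fin K → Measure ℝ) (hκp : ∀ k, IsProbabilityMeasure (κ k))
    (hκn : ∀ k ∈ I, κ k = volume.restrict (Set.Icc 0 1)) (ε : ℝ) :
    lam K ((ZS I ε) ⁻¹' (Aset D I)) * ∏ k : {i : Fin K // ¬ i ∈ I}, κ k (Set.Iio ε)
      ≤ Measure.pi κ (Aset D I) := by
  classical
  haveI := hκp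
  have hA := meas_Aset hDmeas I
  have hsub : (ZS I ε) ⁻¹' (Aset D I) ∩ {p : Fin K → ℝ | ∀ k, k ∉ I → p k ∈ Set.Iio ε}
      ⊆ Aset D I := by
    rintro p ⟨hp1, hp2⟩
    simp only [Set.mem_preimage, Aset, Set.mem_setOf_eq] at hp1 ⊢
    obtain ⟨k, hk, h1⟩ := hp1
    refine ⟨k, hk, D_one_of_le hD01 hmono ?_ h1⟩
    intro i
    by_cases hi : i ∈ I
    · simp [ZS, hi]
    · simp only [ZS_apply, if_neg hi]
      exact (hp2 i hi).le
  have e1 := pi_measure_aux I κ hA (measurableSet_Iio (a := ε)) ε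
  have e2 : lam K ((ZS I ε) ⁻¹' (Aset D I))
      = (Measure.pi fun k : {i : Fin K // i ∈ I} => κ k) ((WS I ε) ⁻¹' (Aset D I)) := by
    rw [← pi_measure_ZS_eq I κ hκn hA ε, pi_measure_ZS I κ hA ε]
  rw [e2, ← e1]
  exact measure_mono hsub

include hD01 hmono in
lemma exists_witness (hDmeas : ∀ k, Measurable fun p => D p k) :
    ∃ κ : Fin K → Measure ℝ, (∀ k, IsProbabilityMeasure (κ k)) ∧
      (∀ k, κ k (Set.Icc (0:ℝ) 1)ᶜ = 0) ∧
      (∀ k ∈ I, κ k = volume.restrict (Set.Icc 0 1)) ∧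
      (Measure.pi κ (Aset D I)).toReal = (lam K ((ZS I 0) ⁻¹' (Aset D I))).toReal := by
  classical
  set κ0 : Fin K → Measure ℝ := fun k => if k ∈ I then unif else Measure.dirac 0 with hκ0
  have hκp : ∀ k, IsProbabilityMeasure (κ0 k) := by
    intro k
    by_cases h : k ∈ I
    · have hk : κ0 k = unif := by simp [hκ0, h]
      rw [hk]; exact unif_prob
    · have hk : κ0 k = Measure.dirac 0 := by simp [hκ0, h]
      rw [hk]; infer_instance
  haveI := hκp
  have hκs : ∀ k, κ0 k (Set.Icc (0:ℝ) 1)ᶜ = 0 := by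
    intro k
    by_cases h : k ∈ I
    · have hk : κ0 k = unif := by simp [hκ0, h]
      rw [hk, show unif = volume.restrict (Set.Icc 0 1) from rfl,
        Measure.restrict_apply (measurableSet_Icc.compl)]
      simp
    · have hk : κ0 k = Measure.dirac 0 := by simp [hκ0, h]
      rw [hk, Measure.dirac_apply' _ (measurableSet_Icc.compl)]
      norm_num [Set.indicator_apply, Set.mem_Icc]
  have hκn : ∀ k ∈ I, κ0 k = volume.restrict (Set.Icc 0 1) := by
    intro k hk
    have hk' : κ0 k = unif := by simp [hκ0, hk]
    rw [hk']; rfl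
  have hA := meas_Aset hDmeas I
  suffices heq : Measure.pi κ0 (Aset D I) = lam K ((ZS I 0) ⁻¹' (Aset D I)) by
    exact ⟨κ0, hκp, hκs, hκn, by rw [heq]⟩
  refine le_antisymm (upperE hD01 hmono I hDmeas κ0 hκp hκs hκn) ?_
  have hHmeas : MeasurableSet {p : Fin K → ℝ | ∀ k, k ∉ I → p k ∈ ({0} : Set ℝ)} := by
    rw [show {p : Fin K → ℝ | ∀ k, k ∉ I → p k ∈ ({0} : Set ℝ)}
        = ⋂ k, ⋂ (_ : k ∉ I), (fun p : Fin K → ℝ => p k) ⁻¹' {0} from by ext p; simp]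
    exact MeasurableSet.iInter fun k => MeasurableSet.iInter fun _ =>
      measurable_pi_apply k (measurableSet_singleton 0)
  have hH1 : Measure.pi κ0 {p : Fin K → ℝ | ∀ k, k ∉ I → p k ∈ ({0} : Set ℝ)} = 1 := by
    have h := pi_measure_aux I κ0 (MeasurableSet.univ (α := Fin K → ℝ))
      (measurableSet_singleton (0:ℝ)) 0
    rw [Set.preimage_univ, Set.univ_inter] at h
    rw [h]
    have h1 : ∀ k : {i : Fin K // ¬ i ∈ I}, κ0 k.1 ({0} : Set ℝ) = 1 := by
      intro k
      have hk : κ0 k.1 = Measure.dirac 0 := by simp [hκ0, k.2]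
      rw [hk]
      simp
    simp [Set.preimage_univ, h1, measure_univ]
  have hHc : Measure.pi κ0 {p : Fin K → ℝ | ∀ k, k ∉ I → p k ∈ ({0} : Set ℝ)}ᶜ = 0 := by
    have h := measure_compl (μ := Measure.pi κ0) hHmeas (measure_ne_top _ _)
    rw [hH1, measure_univ] at h
    simpa using h
  have hsub : (ZS I 0) ⁻¹' (Aset D I)
      ⊆ Aset D I ∪ {p : Fin K → ℝ | ∀ k, k ∉ I → p k ∈ ({0} : Set ℝ)}ᶜ := by
    intro p hp
    by_cases hg : p ∈ {p : Fin K → ℝ | ∀ k, k ∉ I → p k ∈ ({0} : Set ℝ)}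
    · left
      have hpz : ZS I 0 p = p := by
        funext i
        by_cases hi : i ∈ I
        · simp [ZS, hi]
        · simp only [ZS_apply, if_neg hi]
          exact (hg i hi).symm
      rwa [Set.mem_preimage, hpz] at hp
    · right; exact hg
  calc lam K ((ZS I 0) ⁻¹' (Aset D I))
      = Measure.pi κ0 ((ZS I 0) ⁻¹' (Aset D I)) := (pi_measure_ZS_eq I κ0 hκn hA 0).symm
    _ ≤ Measure.pi κ0 (Aset D I ∪ {p : Fin K → ℝ | ∀ k, k ∉ I → p k ∈ ({0} : Set ℝ)}ᶜ) :=
        measure_mono hsub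
    _ ≤ Measure.pi κ0 (Aset D I)
        + Measure.pi κ0 {p : Fin K → ℝ | ∀ k, k ∉ I → p k ∈ ({0} : Set ℝ)}ᶜ :=
        measure_union_le _ _
    _ = Measure.pi κ0 (Aset D I) := by rw [hHc, add_zero]

include hD01 in
lemma integral_eq (hDmeas : ∀ k, Measurable fun p => D p k) (hI : I.Nonempty) :
    (∫ p, (I.sup' hI fun k => D (fun i => if i ∈ I then p i else 0) k) ∂(lam K))
      = (lam K ((ZS I 0) ⁻¹' (Aset D I))).toReal := by
  classical
  have hA := meas_Aset hDmeas I
  have hind : ∀ q : Fin K → ℝ, (I.sup' hI fun k => D q k)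
      = Set.indicator (Aset D I) (fun _ => (1:ℝ)) q := by
    intro q
    by_cases h : q ∈ Aset D I
    · rw [Set.indicator_of_mem h]
      obtain ⟨k, hk, hk1⟩ := h
      refine le_antisymm (Finset.sup'_le _ _ fun j _ => ?_) ?_
      · rcases hD01 q j with h0 | h0 <;> simp [h0]
      · calc (1:ℝ) = D q k := hk1.symm
          _ ≤ _ := Finset.le_sup' _ hk
    · rw [Set.indicator_of_notMem h]
      have hz : ∀ k ∈ I, D q k = 0 := by
        intro k hk
        rcases hD01 q k with h0 | h1
        · exact h0
        · exact absurd ⟨k, hk, h1⟩ h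
      obtain ⟨k, hk⟩ := hI
      refine le_antisymm (Finset.sup'_le _ _ fun j hj => le_of_eq (hz j hj)) ?_
      calc (0:ℝ) = D q k := (hz k hk).symm
        _ ≤ _ := Finset.le_sup' _ hk
  have hptwise : ∀ p : Fin K → ℝ,
      (I.sup' hI fun k => D (fun i => if i ∈ I then p i else 0) k)
        = Set.indicator ((ZS I 0) ⁻¹' (Aset D I)) (fun _ => (1:ℝ)) p := by
    intro p
    have h0 : (fun i => if i ∈ I then p i else 0) = ZS I 0 p := rfl
    rw [h0, hind (ZS I 0 p)]
    by_cases h : ZS I 0 p ∈ Aset D I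
    · rw [Set.indicator_of_mem h, Set.indicator_of_mem (Set.mem_preimage.mpr h)]
    · rw [Set.indicator_of_notMem h,
        Set.indicator_of_notMem (fun hc => h (Set.mem_preimage.mp hc))]
  rw [integral_congr_ae (Filter.Eventually.of_forall hptwise),
    integral_indicator_const (1:ℝ) ((measurable_ZS I 0) hA)]
  simp
  rfl

end Dhyp

end Stmt12Aux


open Stmt12Aux in
/-- For a monotone, right-continuous-at-zero policy `D` and null set `I`
(null p-values Uniform(0,1), independent), if the non-null p-values are driven to 0
along a sequence of alternatives, the probability of a false rejection converges to
`∫_{[0,1]^K} max_{k∈I} D_k(p_I^0) dp`; and the supremum of the FWER over all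
alternative configurations equals this integral. -/
theorem stmt12 (K : ℕ)
    (D : (Fin K → ℝ) → Fin K → ℝ)
    (hD01 : ∀ p k, D p k = 0 ∨ D p k = 1)
    (hDmeas : ∀ k, Measurable fun p => D p k)
    (hmono : ∀ p q : Fin K → ℝ, (∀ i, p i ≤ q i) → ∀ k, D q k ≤ D p k)
    (hrc : ∀ (p : Fin K → ℝ) (i k : Fin K),
      Filter.Tendsto (fun ε : ℝ => D (Function.update p i ε) k)
        (nhdsWithin 0 (Set.Ioi 0)) (nhds (D (Function.update p i 0) k)))
    (I : Finset (Fin K)) (hI : I.Nonempty)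
    (ν : ℕ → Fin K → Measure ℝ)
    (hprob : ∀ j k, IsProbabilityMeasure (ν j k))
    (hsupp : ∀ j k, ν j k (Set.Icc (0:ℝ) 1)ᶜ = 0)
    (hnull : ∀ j, ∀ k ∈ I, ν j k = volume.restrict (Set.Icc 0 1))
    (hextreme : ∀ k ∉ I, ∀ ε : ℝ, 0 < ε →
      Filter.Tendsto (fun j => ν j k (Set.Iio ε)) Filter.atTop (nhds 1)) :
    Filter.Tendsto
        (fun j => (Measure.pi (ν j) {p | ∃ k ∈ I, D p k = 1}).toReal) Filter.atTop
        (nhds (∫ p, (I.sup' hI fun k => D (fun i => if i ∈ I then p i else 0) k)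
          ∂(Measure.pi fun _ : Fin K => volume.restrict (Set.Icc (0:ℝ) 1))))
    ∧ sSup {r : ℝ | ∃ κ : Fin K → Measure ℝ, (∀ k, IsProbabilityMeasure (κ k)) ∧
          (∀ k, κ k (Set.Icc (0:ℝ) 1)ᶜ = 0) ∧
          (∀ k ∈ I, κ k = volume.restrict (Set.Icc 0 1)) ∧
          r = (Measure.pi κ {p | ∃ k ∈ I, D p k = 1}).toReal}
        = ∫ p, (I.sup' hI fun k => D (fun i => if i ∈ I then p i else 0) k)
            ∂(Measure.pi fun _ : Fin K => volume.restrict (Set.Icc (0:ℝ) 1)) := by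
  classical
  haveI := unif_prob
  haveI := lam_prob K
  rw [show {p : Fin K → ℝ | ∃ k ∈ I, D p k = 1} = Aset D I from rfl]
  have hint : (∫ p, (I.sup' hI fun k => D (fun i => if i ∈ I then p i else 0) k)
      ∂(Measure.pi fun _ : Fin K => volume.restrict (Set.Icc (0:ℝ) 1)))
      = (lam K ((ZS I 0) ⁻¹' (Aset D I))).toReal :=
    integral_eq hD01 I hDmeas hI
  rw [hint]
  set T : ℝ := (lam K ((ZS I 0) ⁻¹' (Aset D I))).toReal with hT
  have hupper : ∀ (κ : Fin K → Measure ℝ), (∀ k, IsProbabilityMeasure (κ k)) →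
      (∀ k, κ k (Set.Icc (0:ℝ) 1)ᶜ = 0) → (∀ k ∈ I, κ k = volume.restrict (Set.Icc 0 1)) →
      (Measure.pi κ (Aset D I)).toReal ≤ T := by
    intro κ hκp hκs hκn
    haveI := hκp
    exact ENNReal.toReal_mono (measure_ne_top _ _)
      (upperE hD01 hmono I hDmeas κ hκp hκs hκn)
  constructor
  · -- part 1
    have htendT := tendsto_lam_ZS hD01 hmono I hrc
    rw [Metric.tendsto_atTop]
    intro δ hδ
    have hTn : ∀ᶠ n : ℕ in Filter.atTop,
        T - δ/2 < (lam K ((ZS I (1/(n+1:ℝ))) ⁻¹' (Aset D I))).toReal :=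
      htendT.eventually (eventually_gt_nhds (by linarith))
    obtain ⟨n₀, hn₀⟩ := hTn.exists
    set ε : ℝ := 1/(n₀+1:ℝ) with hε
    have hεpos : 0 < ε := by positivity
    set Tε : ℝ := (lam K ((ZS I ε) ⁻¹' (Aset D I))).toReal with hTεdef
    have hTεnn : 0 ≤ Tε := ENNReal.toReal_nonneg
    have hTεle : Tε ≤ 1 := by
      rw [hTεdef]
      have h := ENNReal.toReal_mono (by simp : (1:ℝ≥0∞) ≠ ⊤)
        (prob_le_one (μ := lam K) (s := (ZS I ε) ⁻¹' (Aset D I)))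
      simpa using h
    have hcj : Filter.Tendsto (fun j => ∏ k : {i : Fin K // ¬ i ∈ I},
        (ν j k.1 (Set.Iio ε)).toReal) Filter.atTop (nhds 1) := by
      have h1 : ∀ k : {i : Fin K // ¬ i ∈ I},
          Filter.Tendsto (fun j => (ν j k.1 (Set.Iio ε)).toReal) Filter.atTop (nhds 1) := by
        intro k
        have h2 := (ENNReal.tendsto_toReal (by simp : (1:ℝ≥0∞) ≠ ⊤)).comp
          (hextreme k.1 k.2 ε hεpos)
        simpa [Function.comp_def] using h2
      have h3 := tendsto_finset_prod
        (f := fun (k : {i : Fin K // ¬ i ∈ I}) j => (ν j k.1 (Set.Iio ε)).toReal)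
        (x := Filter.atTop) (a := fun _ => (1:ℝ)) Finset.univ (fun k _ => h1 k)
      simpa using h3
    obtain ⟨N, hN⟩ := (Metric.tendsto_atTop.mp hcj) (δ/2) (by linarith)
    refine ⟨N, fun j hj => ?_⟩
    have hc := hN j hj
    rw [Real.dist_eq] at hc
    have hc' : 1 - δ/2 ≤ ∏ k : {i : Fin K // ¬ i ∈ I}, (ν j k.1 (Set.Iio ε)).toReal := by
      have := abs_lt.mp hc
      linarith [this.1]
    have hlow : Tε * (∏ k : {i : Fin K // ¬ i ∈ I}, (ν j k.1 (Set.Iio ε)).toReal)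
        ≤ (Measure.pi (ν j) (Aset D I)).toReal := by
      haveI := hprob j
      have h := lowerE hD01 hmono I hDmeas (ν j) (hprob j) (hnull j) ε
      have h2 := ENNReal.toReal_mono (measure_ne_top _ _) h
      rw [ENNReal.toReal_mul, ENNReal.toReal_prod] at h2
      exact h2
    have h3 : Tε * (1 - δ/2)
        ≤ Tε * (∏ k : {i : Fin K // ¬ i ∈ I}, (ν j k.1 (Set.Iio ε)).toReal) :=
      mul_le_mul_of_nonneg_left hc' hTεnn
    have h5 : 0 ≤ (δ/2) * (1 - Tε) := mul_nonneg (by linarith) (by linarith)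
    have hub := hupper (ν j) (hprob j) (hsupp j) (hnull j)
    rw [Real.dist_eq, abs_lt]
    constructor
    · have : T - δ < (Measure.pi (ν j) (Aset D I)).toReal := by nlinarith [hn₀]
      linarith
    · linarith
  · -- part 2
    have hub : ∀ r ∈ {r : ℝ | ∃ κ : Fin K → Measure ℝ, (∀ k, IsProbabilityMeasure (κ k)) ∧
          (∀ k, κ k (Set.Icc (0:ℝ) 1)ᶜ = 0) ∧
          (∀ k ∈ I, κ k = volume.restrict (Set.Icc 0 1)) ∧
          r = (Measure.pi κ (Aset D I)).toReal}, r ≤ T := by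
      rintro r ⟨κ, hκp, hκs, hκn, rfl⟩
      exact hupper κ hκp hκs hκn
    have hmem : T ∈ {r : ℝ | ∃ κ : Fin K → Measure ℝ, (∀ k, IsProbabilityMeasure (κ k)) ∧
          (∀ k, κ k (Set.Icc (0:ℝ) 1)ᶜ = 0) ∧
          (∀ k ∈ I, κ k = volume.restrict (Set.Icc 0 1)) ∧
          r = (Measure.pi κ (Aset D I)).toReal} := by
      obtain ⟨κ, h1, h2, h3, h4⟩ := exists_witness hD01 hmono I hDmeas
      exact ⟨κ, h1, h2, h3, h4.symm⟩
    exact le_antisymm (csSup_le ⟨T, hmem⟩ hub) (le_csSup ⟨T, hub⟩ hmem)
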